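/- With ℓ_{X,Y} = (HΛH)_{X,Y}, if (X,Y) ∉ (ker Φ)^⊥ then ℓ_{X,Y} = 0, and if (X,Y) ∈ Δ^⊥ then ℓ_{X,Y} = q^{−r̂} we(C_C). Moreover ℓ_{X+U, Y+V} = ℓ_{X,Y} for all (U,V) ∈ Δ^⊥. -/

import Mathlib

set_option maxHeartbeats 1000000
set_option linter.unusedSectionVars false

open Matrix

open Classical in
/-- The (Hamming) weight enumerator of a subset `S ⊆ F^n`. -/
noncomputable def we {n : ℕ} {F : Type} [Fintype F] [DecidableEq F] [Zero F]
    (S : Set (Fin n → F)) : Polynomial ℂ :=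
  ∑ a : Fin n → F, if a ∈ S then Polynomial.X ^ hammingNorm a else 0

section Aux
variable {p s : ℕ} [Fact p.Prime] {F : Type} [Field F] [Fintype F] [CharP F p]
  [Algebra (ZMod p) F]

lemma aux_tau_add (τ : F → ZMod p)
    (hτ : ∀ a : F, algebraMap (ZMod p) F (τ a) = ∑ i ∈ Finset.range s, a ^ p ^ i)
    (a b : F) : τ (a + b) = τ a + τ b := by
  apply (algebraMap (ZMod p) F).injective
  rw [map_add, hτ, hτ, hτ, ← Finset.sum_add_distrib]
  exact Finset.sum_congr rfl fun i _ => add_pow_char_pow a b p i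

lemma aux_tau_zero (τ : F → ZMod p)
    (hτ : ∀ a : F, algebraMap (ZMod p) F (τ a) = ∑ i ∈ Finset.range s, a ^ p ^ i) :
    τ 0 = 0 := by
  apply (algebraMap (ZMod p) F).injective
  rw [hτ 0, RingHom.map_zero]
  exact Finset.sum_eq_zero fun i _ => zero_pow (pow_ne_zero i (Fact.out : p.Prime).ne_zero)

lemma aux_tau_exists (hs : 0 < s) (hq : Fintype.card F = p ^ s) (τ : F → ZMod p)
    (hτ : ∀ a : F, algebraMap (ZMod p) F (τ a) = ∑ i ∈ Finset.range s, a ^ p ^ i) :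
    ∃ b : F, τ b ≠ 0 := by
  have hp : p.Prime := Fact.out
  by_contra h
  push_neg at h
  set f : Polynomial F := ∑ i ∈ Finset.range s, Polynomial.X ^ p ^ i with hf
  have heval : ∀ b : F, f.eval b = 0 := by
    intro b
    have := hτ b
    rw [h b, map_zero] at this
    simp [hf, Polynomial.eval_finset_sum, ← this]
  have hdeg : f.natDegree < Fintype.card F := by
    have h1 : f.natDegree ≤ p ^ (s - 1) := by
      refine Polynomial.natDegree_sum_le_of_forall_le _ _ fun i hi => ?_
      simpa using Nat.pow_le_pow_right hp.one_le
        (Nat.le_sub_one_of_lt (Finset.mem_range.mp hi))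
    refine lt_of_le_of_lt h1 ?_
    rw [hq]
    exact Nat.pow_lt_pow_right hp.one_lt (Nat.sub_lt hs one_pos)
  have hzero : f = 0 :=
    Polynomial.eq_zero_of_natDegree_lt_card_of_eval_eq_zero f Function.injective_id
      (fun b => heval b) hdeg
  have hcoeff : f.coeff (p ^ (s - 1)) = 1 := by
    rw [hf, Polynomial.finset_sum_coeff]
    rw [Finset.sum_eq_single_of_mem (s - 1) (Finset.mem_range.mpr (Nat.sub_lt hs one_pos))]
    · simp
    · intro i hi hne
      rw [Polynomial.coeff_X_pow, if_neg]
      intro hpe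
      exact hne (Nat.pow_right_injective hp.two_le hpe.symm)
  rw [hzero] at hcoeff
  simp at hcoeff

lemma aux_zpow_add {p : ℕ} [Fact p.Prime] {ζ : ℂ} (hζ : IsPrimitiveRoot ζ p) (x y : ZMod p) :
    ζ ^ (x + y).val = ζ ^ x.val * ζ ^ y.val := by
  haveI : NeZero p := ⟨(Fact.out : p.Prime).ne_zero⟩
  have hone : ζ ^ p = 1 := hζ.pow_eq_one
  have key : ∀ m : ℕ, ζ ^ (m % p) = ζ ^ m := by
    intro m
    conv_rhs => rw [← Nat.mod_add_div m p]
    rw [pow_add, pow_mul, hone, one_pow, mul_one]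
  rw [ZMod.val_add, key, pow_add]

lemma aux_zpow_ne_one {p : ℕ} [Fact p.Prime] {ζ : ℂ} (hζ : IsPrimitiveRoot ζ p)
    {x : ZMod p} (hx : x ≠ 0) : ζ ^ x.val ≠ 1 := by
  haveI : NeZero p := ⟨(Fact.out : p.Prime).ne_zero⟩
  intro h1
  have hdvd := hζ.dvd_of_pow_eq_one _ h1
  have hne : x.val ≠ 0 := fun h => hx ((ZMod.val_eq_zero x).mp h)
  exact absurd (Nat.le_of_dvd (Nat.pos_of_ne_zero hne) hdvd) (not_le.mpr (ZMod.val_lt x))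

lemma aux_card_fiber {F : Type} [Field F] {M N : Type} [AddCommGroup M] [Module F M]
    [AddCommGroup N] [Module F N] (φ : M →ₗ[F] N) (v : N) (m₀ : M) (hm₀ : φ m₀ = v) :
    Nat.card {m : M // φ m = v} = Nat.card (LinearMap.ker φ) := by
  apply Nat.card_congr
  refine ⟨fun x => ⟨x.1 - m₀, by simp [LinearMap.mem_ker, map_sub, x.2, hm₀]⟩,
    fun y => ⟨m₀ + y.1, by
      have hy := y.2
      rw [LinearMap.mem_ker] at hy
      simp [map_add, hm₀, hy]⟩,
    fun x => by simp, fun y => by simp⟩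

lemma aux_sum_ite {α : Type} [Fintype α] {P : α → Prop} [DecidablePred P]
    {M : Type} [AddCommMonoid M] (c : M) :
    (∑ a : α, if P a then c else 0) = (Nat.card {a // P a}) • c := by
  rw [← Finset.sum_filter, Finset.sum_const, Nat.card_eq_fintype_card, Fintype.card_subtype]

end Aux

/-- With `ℓ_{X,Y} = (HΛH)_{X,Y}` (adjacency matrix `Λ` of a minimal
encoder, MacWilliams matrix `H`): if `(X,Y) ∉ (ker Φ)^⊥` then `ℓ_{X,Y} = 0`; if
`(X,Y) ∈ Δ^⊥` then `ℓ_{X,Y} = q^{−r̂} we(C_C)`; and `ℓ_{X+U,Y+V} = ℓ_{X,Y}` for all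
`(U,V) ∈ Δ^⊥`. -/

theorem stmt_16 {p s k n r rhat : ℕ} [Fact p.Prime] (hs : 0 < s)
    {F : Type} [Field F] [Fintype F] [DecidableEq F] [CharP F p] [Algebra (ZMod p) F]
    (hq : Fintype.card F = p ^ s)
    (ζ : ℂ) (hζ : IsPrimitiveRoot ζ p)
    (τ : F → ZMod p)
    (hτ : ∀ a : F, algebraMap (ZMod p) F (τ a) = ∑ i ∈ Finset.range s, a ^ p ^ i)
    (G : Matrix (Fin k) (Fin n) (Polynomial F))
    (d : Fin k → ℕ)
    (hGdeg : ∀ i j, (G i j).natDegree ≤ d i)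
    (hGbasic : ∃ G' : Matrix (Fin n) (Fin k) (Polynomial F), G * G' = 1)
    (hGmin : LinearIndependent F (fun i : Fin k => fun j : Fin n => (G i j).coeff (d i)))
    (A : Matrix (Σ i, Fin (d i)) (Σ i, Fin (d i)) F)
    (B : Matrix (Fin k) (Σ i, Fin (d i)) F)
    (Cm : Matrix (Σ i, Fin (d i)) (Fin n) F)
    (D : Matrix (Fin k) (Fin n) F)
    (hA : ∀ x y, A x y = if x.1 = y.1 ∧ (x.2 : ℕ) + 1 = (y.2 : ℕ) then 1 else 0)
    (hB : ∀ i y, B i y = if i = y.1 ∧ (y.2 : ℕ) = 0 then 1 else 0)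
    (hC : ∀ x j, Cm x j = (G x.1 j).coeff ((x.2 : ℕ) + 1))
    (hD : ∀ i j, D i j = (G i j).coeff 0)
    (hr : r = (Finset.univ.filter fun i => 0 < d i).card)
    (lam : (((Σ i, Fin (d i)) → F) × ((Σ i, Fin (d i)) → F)) → Polynomial ℂ)
    (hlam : ∀ w, lam w
      = we {v | ∃ u : Fin k → F, w.2 = w.1 ᵥ* A + u ᵥ* B ∧ v = w.1 ᵥ* Cm + u ᵥ* D})
    (CCsub Ccon : Submodule F (Fin n → F))
    (hCCsub : (CCsub : Set (Fin n → F))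
        = {v | ∃ (X : (Σ i, Fin (d i)) → F) (u : Fin k → F), v = X ᵥ* Cm + u ᵥ* D})
    (hCcon : (Ccon : Set (Fin n → F))
        = {v | ∃ w : Fin k → F, w ᵥ* B = 0 ∧ v = w ᵥ* D})
    (hCCrank : Module.finrank F CCsub = k + rhat)
    (hCconrank : Module.finrank F Ccon = k - r)
    (H : Matrix ((Σ i, Fin (d i)) → F) ((Σ i, Fin (d i)) → F) ℂ)
    (hH : ∀ X Y, H X Y = ((Real.sqrt (((p : ℝ) ^ s) ^ (∑ i, d i)))⁻¹ : ℂ)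
        * ζ ^ (τ (∑ x, X x * Y x)).val)
    (Λ : Matrix ((Σ i, Fin (d i)) → F) ((Σ i, Fin (d i)) → F) (Polynomial ℂ))
    (hΛ : ∀ X Y, Λ X Y = lam (X, Y)) :
    (∀ X Y : (Σ i, Fin (d i)) → F,
      (∃ w : ((Σ i, Fin (d i)) → F) × ((Σ i, Fin (d i)) → F),
          ((∃ u : Fin k → F, w.2 = w.1 ᵥ* A + u ᵥ* B) ∧
            w.1 ᵥ* Cm + (w.2 ᵥ* Bᵀ) ᵥ* D ∈ Ccon) ∧
          (∑ x, X x * w.1 x) + (∑ x, Y x * w.2 x) ≠ 0) →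
        (H.map Polynomial.C * Λ * H.map Polynomial.C) X Y = 0) ∧
    (∀ X Y : (Σ i, Fin (d i)) → F,
      (∀ w : ((Σ i, Fin (d i)) → F) × ((Σ i, Fin (d i)) → F),
          (∃ u : Fin k → F, w.2 = w.1 ᵥ* A + u ᵥ* B) →
            (∑ x, X x * w.1 x) + (∑ x, Y x * w.2 x) = 0) →
        (H.map Polynomial.C * Λ * H.map Polynomial.C) X Y
          = Polynomial.C (((Fintype.card F : ℂ) ^ rhat)⁻¹)
              * we (CCsub : Set (Fin n → F))) ∧
    (∀ X Y U V : (Σ i, Fin (d i)) → F,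
      (∀ w : ((Σ i, Fin (d i)) → F) × ((Σ i, Fin (d i)) → F),
          (∃ u : Fin k → F, w.2 = w.1 ᵥ* A + u ᵥ* B) →
            (∑ x, U x * w.1 x) + (∑ x, V x * w.2 x) = 0) →
        (H.map Polynomial.C * Λ * H.map Polynomial.C) (X + U) (Y + V)
          = (H.map Polynomial.C * Λ * H.map Polynomial.C) X Y) := by
  classical
  have hp : p.Prime := Fact.out
  have hq0 : (Fintype.card F : ℂ) ≠ 0 := Nat.cast_ne_zero.mpr Fintype.card_ne_zero
  have hτadd : ∀ a b : F, τ (a + b) = τ a + τ b := aux_tau_add τ hτ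
  have hτ0 : τ 0 = 0 := aux_tau_zero τ hτ
  obtain ⟨b₀, hb₀⟩ := aux_tau_exists hs hq τ hτ
  -- lam vanishes off Δ
  have hlam0 : ∀ g : ((Σ i, Fin (d i)) → F) × ((Σ i, Fin (d i)) → F),
      (¬ ∃ u : Fin k → F, g.2 = g.1 ᵥ* A + u ᵥ* B) → lam g = 0 := by
    intro g hg
    rw [hlam]
    unfold we
    refine Finset.sum_eq_zero fun a _ => ?_
    rw [if_neg]
    rintro ⟨u, h1, -⟩
    exact hg ⟨u, h1⟩
  -- structural lemmas on B, A
  have hBv : ∀ (v : Fin k → F) (y : Σ i, Fin (d i)),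
      (v ᵥ* B) y = if (y.2 : ℕ) = 0 then v y.1 else 0 := by
    intro v y
    by_cases h0 : (y.2 : ℕ) = 0
    · simp [Matrix.vecMul, dotProduct, hB, h0]
    · simp [Matrix.vecMul, dotProduct, hB, h0]
  have hAv : ∀ (W : (Σ i, Fin (d i)) → F) (y : Σ i, Fin (d i)),
      (y.2 : ℕ) = 0 → (W ᵥ* A) y = 0 := by
    intro W y hy
    have hrw : (W ᵥ* A) y = ∑ x, W x * A x y := rfl
    rw [hrw]
    refine Finset.sum_eq_zero fun x _ => ?_
    rw [hA, if_neg, mul_zero]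
    rintro ⟨-, h2⟩
    rw [hy] at h2
    exact Nat.succ_ne_zero _ h2
  have hBtv : ∀ (Z : (Σ i, Fin (d i)) → F) (i : Fin k),
      (Z ᵥ* Bᵀ) i = if h : 0 < d i then Z ⟨i, ⟨0, h⟩⟩ else 0 := by
    intro Z i
    have hrw : (Z ᵥ* Bᵀ) i = ∑ y, Z y * Bᵀ y i := rfl
    rw [hrw]
    by_cases h : 0 < d i
    · rw [dif_pos h]
      have hmain : ∀ y : Σ j, Fin (d j), y ∈ Finset.univ → y ≠ ⟨i, ⟨0, h⟩⟩ →
          Z y * Bᵀ y i = 0 := by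
        intro y _ hy
        rw [Matrix.transpose_apply, hB, if_neg, mul_zero]
        rintro ⟨h1, h2⟩
        rcases y with ⟨j, t⟩
        apply hy
        subst h1
        simp only [Sigma.mk.inj_iff, heq_eq_eq, true_and]
        exact Fin.ext h2
      rw [Finset.sum_eq_single_of_mem ⟨i, ⟨0, h⟩⟩ (Finset.mem_univ _) hmain]
      rw [Matrix.transpose_apply, hB, if_pos ⟨rfl, rfl⟩, mul_one]
    · rw [dif_neg h]
      refine Finset.sum_eq_zero fun y _ => ?_
      rw [Matrix.transpose_apply, hB, if_neg, mul_zero]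
      rintro ⟨h1, -⟩
      exact h (h1 ▸ y.2.pos)
  -- kernel of B description
  have hK : ∀ w : Fin k → F, w ᵥ* B = 0 ↔ ∀ i, 0 < d i → w i = 0 := by
    intro w
    constructor
    · intro hw i hi
      have := congrFun hw ⟨i, ⟨0, hi⟩⟩
      rw [hBv] at this
      simpa using this
    · intro hw
      funext y
      rw [hBv]
      by_cases h0 : (y.2 : ℕ) = 0
      · rw [if_pos h0]
        exact hw y.1 y.2.pos
      · rw [if_neg h0]
        rfl
  have hCconD : ∀ κ : Fin k → F, κ ᵥ* B = 0 → κ ᵥ* D ∈ Ccon := by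
    intro κ hκ
    rw [← SetLike.mem_coe, hCcon]
    exact ⟨κ, hκ, rfl⟩
  have hKinj : ∀ w : Fin k → F, w ᵥ* B = 0 → w ᵥ* D = 0 → w = 0 := by
    have eqv : {w : Fin k → F // w ᵥ* B = 0} ≃ ({i : Fin k // ¬ 0 < d i} → F) := by
      refine ⟨fun w i => w.1 i.1,
        fun f => ⟨fun i => if h : 0 < d i then 0 else f ⟨i, h⟩,
          (hK _).mpr fun i hi => dif_pos hi⟩,
        fun w => ?_, fun f => ?_⟩
      · apply Subtype.ext
        funext i
        dsimp
        split
        · exact ((hK w.1).mp w.2 i ‹_›).symm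
        · rfl
      · funext i
        dsimp
        rw [dif_neg i.2]
    have hcardsub : Fintype.card {i : Fin k // ¬ 0 < d i} = k - r := by
      rw [Fintype.card_subtype]
      have hfil := Finset.card_filter_add_card_filter_not
        (s := (Finset.univ : Finset (Fin k))) (p := fun i => 0 < d i)
      rw [Finset.card_univ, Fintype.card_fin] at hfil
      omega
    have hcardK : Nat.card {w : Fin k → F // w ᵥ* B = 0} = Fintype.card F ^ (k - r) := by
      rw [Nat.card_congr eqv, Nat.card_eq_fintype_card, Fintype.card_fun, hcardsub]
    have hcardC : Nat.card Ccon = Fintype.card F ^ (k - r) := by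
      rw [Nat.card_eq_fintype_card, Module.card_eq_pow_finrank (K := F), hCconrank]
    set f : {w : Fin k → F // w ᵥ* B = 0} → Ccon := fun w => ⟨w.1 ᵥ* D, by
      rw [← SetLike.mem_coe, hCcon]; exact ⟨w.1, w.2, rfl⟩⟩ with hfdef
    have hsurj : Function.Surjective f := by
      rintro ⟨v, hv⟩
      rw [← SetLike.mem_coe, hCcon] at hv
      obtain ⟨w, hw1, rfl⟩ := hv
      exact ⟨⟨w, hw1⟩, rfl⟩
    have hbij : Function.Bijective f := by
      rw [Fintype.bijective_iff_surjective_and_card]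
      refine ⟨hsurj, ?_⟩
      rw [← Nat.card_eq_fintype_card, ← Nat.card_eq_fintype_card, hcardK, hcardC]
    intro w h1 h2
    have he : f ⟨w, h1⟩ = f ⟨0, by rw [Matrix.zero_vecMul]⟩ := by
      apply Subtype.ext
      simp only [hfdef, h2, Matrix.zero_vecMul]
    exact congrArg Subtype.val (hbij.1 he)
  -- coset description
  have hcoset : ∀ (W Z : (Σ i, Fin (d i)) → F) (u₀ : Fin k → F),
      Z = W ᵥ* A + u₀ ᵥ* B →
      {v : Fin n → F | ∃ u, Z = W ᵥ* A + u ᵥ* B ∧ v = W ᵥ* Cm + u ᵥ* D}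
        = {v : Fin n → F | ∃ κ, κ ᵥ* B = 0 ∧ v = (W ᵥ* Cm + u₀ ᵥ* D) + κ ᵥ* D} := by
    intro W Z u₀ h₀
    ext v
    simp only [Set.mem_setOf_eq]
    constructor
    · rintro ⟨u, h1, rfl⟩
      have hBu : u ᵥ* B = u₀ ᵥ* B := by
        have := h₀.symm.trans h1
        exact (add_left_cancel this).symm
      refine ⟨u - u₀, ?_, ?_⟩
      · rw [Matrix.sub_vecMul, hBu, sub_self]
      · rw [Matrix.sub_vecMul]
        abel
    · rintro ⟨κ, hκ, rfl⟩
      refine ⟨u₀ + κ, ?_, ?_⟩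
      · rw [Matrix.add_vecMul, hκ, add_zero]
        exact h₀
      · rw [Matrix.add_vecMul]
        abel
  -- translation invariance of lam
  have hinv : ∀ (g nn : ((Σ i, Fin (d i)) → F) × ((Σ i, Fin (d i)) → F)),
      (∃ u : Fin k → F, nn.2 = nn.1 ᵥ* A + u ᵥ* B) →
      nn.1 ᵥ* Cm + (nn.2 ᵥ* Bᵀ) ᵥ* D ∈ Ccon → lam (g + nn) = lam g := by
    rintro g nn ⟨u₁, hu₁⟩ hCc
    by_cases hg : ∃ u : Fin k → F, g.2 = g.1 ᵥ* A + u ᵥ* B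
    · obtain ⟨u₀, hu₀⟩ := hg
      -- c₀ ∈ Ccon
      have hκ'B : (u₁ - nn.2 ᵥ* Bᵀ) ᵥ* B = 0 := by
        funext y
        rw [Matrix.sub_vecMul]
        show (u₁ ᵥ* B) y - ((nn.2 ᵥ* Bᵀ) ᵥ* B) y = 0
        rw [hBv, hBv]
        by_cases h0 : (y.2 : ℕ) = 0
        · rw [if_pos h0, if_pos h0, hBtv, dif_pos y.2.pos, hu₁]
          show u₁ y.1 - ((nn.1 ᵥ* A) ⟨y.1, ⟨0, y.2.pos⟩⟩ + (u₁ ᵥ* B) ⟨y.1, ⟨0, y.2.pos⟩⟩) = 0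
          rw [hAv _ _ rfl, hBv, if_pos rfl, zero_add, sub_self]
        · rw [if_neg h0, if_neg h0, sub_zero]
      have hc₀ : nn.1 ᵥ* Cm + u₁ ᵥ* D ∈ Ccon := by
        have h2 : nn.1 ᵥ* Cm + u₁ ᵥ* D
            = (nn.1 ᵥ* Cm + (nn.2 ᵥ* Bᵀ) ᵥ* D) + (u₁ - nn.2 ᵥ* Bᵀ) ᵥ* D := by
          rw [Matrix.sub_vecMul]
          abel
        rw [h2]
        exact Submodule.add_mem _ hCc (hCconD _ hκ'B)
      rw [hlam, hlam]
      congr 1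
      have hgn1 : (g + nn).1 = g.1 + nn.1 := rfl
      have hgn2 : (g + nn).2 = g.2 + nn.2 := rfl
      rw [hgn1, hgn2]
      rw [hcoset (g.1 + nn.1) (g.2 + nn.2) (u₀ + u₁)
        (by rw [Matrix.add_vecMul, Matrix.add_vecMul, hu₀, hu₁]; abel)]
      rw [hcoset g.1 g.2 u₀ hu₀]
      obtain ⟨w', hw'B, hw'D⟩ : ∃ w' : Fin k → F, w' ᵥ* B = 0
          ∧ nn.1 ᵥ* Cm + u₁ ᵥ* D = w' ᵥ* D := by
        have := hc₀
        rw [← SetLike.mem_coe, hCcon] at this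
        exact this
      have hsplit : (g.1 + nn.1) ᵥ* Cm + (u₀ + u₁) ᵥ* D
          = (g.1 ᵥ* Cm + u₀ ᵥ* D) + (nn.1 ᵥ* Cm + u₁ ᵥ* D) := by
        rw [Matrix.add_vecMul, Matrix.add_vecMul]
        abel
      ext v
      simp only [Set.mem_setOf_eq]
      constructor
      · rintro ⟨κ, hκ, rfl⟩
        refine ⟨w' + κ, by rw [Matrix.add_vecMul, hw'B, hκ, add_zero], ?_⟩
        rw [hsplit, hw'D, Matrix.add_vecMul]
        abel
      · rintro ⟨κ, hκ, rfl⟩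
        refine ⟨κ - w', by rw [Matrix.sub_vecMul, hw'B, hκ, sub_self], ?_⟩
        rw [hsplit, hw'D, Matrix.sub_vecMul]
        abel
    · rw [hlam0 g hg, hlam0]
      rintro ⟨u, hu⟩
      apply hg
      refine ⟨u - u₁, ?_⟩
      have hgn1 : (g + nn).1 = g.1 + nn.1 := rfl
      have hgn2 : (g + nn).2 = g.2 + nn.2 := rfl
      rw [hgn1, hgn2, Matrix.add_vecMul] at hu
      rw [hu₁] at hu
      rw [Matrix.sub_vecMul]
      linear_combination hu
  -- constant computation
  have hcc : (((Real.sqrt (((p : ℝ) ^ s) ^ (∑ i, d i)))⁻¹ : ℂ))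
      * ((Real.sqrt (((p : ℝ) ^ s) ^ (∑ i, d i)))⁻¹ : ℂ)
      = ((Fintype.card F : ℂ) ^ (∑ i, d i))⁻¹ := by
    rw [← mul_inv, ← Complex.ofReal_mul, Real.mul_self_sqrt (by positivity), hq]
    push_cast
    ring
  -- matrix product expansion
  have hexp : ∀ X Y : (Σ i, Fin (d i)) → F,
      (H.map Polynomial.C * Λ * H.map Polynomial.C) X Y
        = Polynomial.C (((Fintype.card F : ℂ) ^ (∑ i, d i))⁻¹)
            * ∑ g : ((Σ i, Fin (d i)) → F) × ((Σ i, Fin (d i)) → F),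
                Polynomial.C (ζ ^ (τ ((∑ x, X x * g.1 x) + (∑ x, Y x * g.2 x))).val)
                  * lam g := by
    intro X Y
    rw [Finset.mul_sum, Fintype.sum_prod_type]
    simp only [Matrix.mul_apply, Matrix.map_apply, Finset.sum_mul]
    rw [Finset.sum_comm]
    refine Finset.sum_congr rfl fun w _ => Finset.sum_congr rfl fun z _ => ?_
    rw [hH, hH, hΛ]
    have hs2 : (∑ x, z x * Y x) = ∑ x, Y x * z x :=
      Finset.sum_congr rfl fun x _ => mul_comm _ _
    rw [hs2, hτadd, aux_zpow_add hζ, ← hcc]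
    rw [_root_.map_mul, _root_.map_mul, _root_.map_mul, _root_.map_mul]
    ring
  -- the linear map (W,u) ↦ W Cm + u D
  set φL : (((Σ i, Fin (d i)) → F) × (Fin k → F)) →ₗ[F] (Fin n → F) :=
    (Matrix.vecMulLinear Cm).comp (LinearMap.fst F _ _)
      + (Matrix.vecMulLinear D).comp (LinearMap.snd F _ _) with hφdef
  have hφL : ∀ mu : ((Σ i, Fin (d i)) → F) × (Fin k → F),
      φL mu = mu.1 ᵥ* Cm + mu.2 ᵥ* D := fun mu => rfl
  have hrange : LinearMap.range φL = CCsub := by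
    ext v
    rw [LinearMap.mem_range, ← SetLike.mem_coe, hCCsub]
    constructor
    · rintro ⟨mu, rfl⟩
      exact ⟨mu.1, mu.2, hφL mu⟩
    · rintro ⟨W, u, rfl⟩
      exact ⟨(W, u), rfl⟩
  have hky : Module.finrank F (LinearMap.ker φL) = (∑ i, d i) - rhat ∧ rhat ≤ ∑ i, d i := by
    have hrk := LinearMap.finrank_range_add_finrank_ker φL
    rw [hrange, hCCrank] at hrk
    have hdom : Module.finrank F (((Σ i, Fin (d i)) → F) × (Fin k → F))
        = (∑ i, d i) + k := by
      rw [Module.finrank_prod, Module.finrank_pi, Module.finrank_pi, Fintype.card_fin]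
      simp [Fintype.card_sigma]
    rw [hdom] at hrk
    omega
  have hfib : ∀ v : Fin n → F,
      Nat.card {mu : ((Σ i, Fin (d i)) → F) × (Fin k → F) // φL mu = v}
        = if v ∈ (CCsub : Set (Fin n → F)) then Fintype.card F ^ ((∑ i, d i) - rhat)
          else 0 := by
    intro v
    by_cases hv : v ∈ (CCsub : Set (Fin n → F))
    · rw [if_pos hv]
      obtain ⟨mu₀, hmu₀⟩ : ∃ mu₀, φL mu₀ = v := by
        have hvr : v ∈ LinearMap.range φL := by rw [hrange]; exact hv
        exact hvr
      rw [aux_card_fiber φL v mu₀ hmu₀, Nat.card_eq_fintype_card,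
        Module.card_eq_pow_finrank (K := F), hky.1]
    · rw [if_neg hv]
      have hie : IsEmpty {mu : ((Σ i, Fin (d i)) → F) × (Fin k → F) // φL mu = v} := by
        refine ⟨fun mu => hv ?_⟩
        rw [← mu.2]
        have hmr : φL mu.1 ∈ LinearMap.range φL := ⟨mu.1, rfl⟩
        rwa [hrange] at hmr
      exact Nat.card_of_isEmpty
  have hNv : ∀ v : Fin n → F,
      Nat.card {g : ((Σ i, Fin (d i)) → F) × ((Σ i, Fin (d i)) → F) //
          v ∈ {v' | ∃ u : Fin k → F, g.2 = g.1 ᵥ* A + u ᵥ* B ∧ v' = g.1 ᵥ* Cm + u ᵥ* D}}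
        = Nat.card {mu : ((Σ i, Fin (d i)) → F) × (Fin k → F) // φL mu = v} := by
    intro v
    refine (Nat.card_congr (Equiv.ofBijective
      (fun mu => ⟨(mu.1.1, mu.1.1 ᵥ* A + mu.1.2 ᵥ* B),
        ⟨mu.1.2, rfl, mu.2.symm.trans (hφL _)⟩⟩)
      ⟨?_, ?_⟩)).symm
    · rintro ⟨⟨W, u⟩, hmu⟩ ⟨⟨W', u'⟩, hmu'⟩ hEq
      have hval := congrArg Subtype.val hEq
      have h1 : W = W' := congrArg Prod.fst hval
      subst h1
      have h2 : W ᵥ* A + u ᵥ* B = W ᵥ* A + u' ᵥ* B := congrArg Prod.snd hval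
      have hB0 : (u - u') ᵥ* B = 0 := by
        rw [Matrix.sub_vecMul, add_left_cancel h2, sub_self]
      have hD0 : (u - u') ᵥ* D = 0 := by
        rw [hφL] at hmu hmu'
        rw [Matrix.sub_vecMul, add_left_cancel (hmu.trans hmu'.symm), sub_self]
      have hu : u = u' := sub_eq_zero.mp (hKinj _ hB0 hD0)
      subst hu
      rfl
    · rintro ⟨⟨W, Z⟩, u, h1, h2⟩
      refine ⟨⟨(W, u), by rw [hφL]; exact h2.symm⟩, Subtype.ext ?_⟩
      exact congrArg (Prod.mk W) h1.symm
  have hcount : (∑ g : ((Σ i, Fin (d i)) → F) × ((Σ i, Fin (d i)) → F), lam g)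
      = Polynomial.C ((Fintype.card F : ℂ) ^ ((∑ i, d i) - rhat))
          * we (CCsub : Set (Fin n → F)) := by
    simp only [hlam]
    unfold we
    rw [Finset.sum_comm, Finset.mul_sum]
    refine Finset.sum_congr rfl fun v _ => ?_
    refine ((@aux_sum_ite _ _ _ (fun a => Classical.propDecidable _) _ _
      ((Polynomial.X : Polynomial ℂ) ^ hammingNorm v)).trans ?_)
    rw [hNv v, hfib v]
    by_cases hv : v ∈ (CCsub : Set (Fin n → F))
    · simp only [hv, if_true]
      rw [nsmul_eq_mul, Nat.cast_pow, map_pow, map_natCast]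
    · simp only [hv, if_false]
      rw [zero_smul, mul_zero]
  refine ⟨?_, ?_, ?_⟩
  · -- Part 1: vanishing off the orthogonal of ker Φ
    rintro X Y ⟨w, ⟨hwΔ, hwC⟩, hwne⟩
    set t : F := (∑ x, X x * w.1 x) + (∑ x, Y x * w.2 x) with htdef
    have ht0 : t ≠ 0 := hwne
    obtain ⟨a, hta⟩ : ∃ a : F, τ (a * t) ≠ 0 := by
      refine ⟨b₀ * t⁻¹, ?_⟩
      rw [mul_assoc, inv_mul_cancel₀ ht0, mul_one]
      exact hb₀
    set nn := a • w with hnn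
    have hnn1 : nn.1 = a • w.1 := rfl
    have hnn2 : nn.2 = a • w.2 := rfl
    have hnΔ : ∃ u : Fin k → F, nn.2 = nn.1 ᵥ* A + u ᵥ* B := by
      obtain ⟨u, hu⟩ := hwΔ
      refine ⟨a • u, ?_⟩
      rw [hnn1, hnn2, hu, smul_add, Matrix.smul_vecMul, Matrix.smul_vecMul]
    have hnC : nn.1 ᵥ* Cm + (nn.2 ᵥ* Bᵀ) ᵥ* D ∈ Ccon := by
      have hsm : nn.1 ᵥ* Cm + (nn.2 ᵥ* Bᵀ) ᵥ* D
          = a • (w.1 ᵥ* Cm + (w.2 ᵥ* Bᵀ) ᵥ* D) := by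
        rw [hnn1, hnn2, Matrix.smul_vecMul, Matrix.smul_vecMul, Matrix.smul_vecMul, smul_add]
      rw [hsm]
      exact Submodule.smul_mem _ _ hwC
    have hbn : (∑ x, X x * nn.1 x) + (∑ x, Y x * nn.2 x) = a * t := by
      rw [htdef, hnn1, hnn2]
      simp only [Pi.smul_apply, smul_eq_mul, mul_add, Finset.mul_sum]
      congr 1 <;> exact Finset.sum_congr rfl fun x _ => by ring
    set Sm : Polynomial ℂ := ∑ g : ((Σ i, Fin (d i)) → F) × ((Σ i, Fin (d i)) → F),
        Polynomial.C (ζ ^ (τ ((∑ x, X x * g.1 x) + (∑ x, Y x * g.2 x))).val) * lam g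
      with hSmdef
    have hshift : Sm = Polynomial.C (ζ ^ (τ (a * t)).val) * Sm := by
      conv_lhs => rw [hSmdef, ← Equiv.sum_comp (Equiv.addRight nn)
        (fun g : ((Σ i, Fin (d i)) → F) × ((Σ i, Fin (d i)) → F) =>
          Polynomial.C (ζ ^ (τ ((∑ x, X x * g.1 x) + (∑ x, Y x * g.2 x))).val) * lam g)]
      rw [hSmdef, Finset.mul_sum]
      refine Finset.sum_congr rfl fun g _ => ?_
      simp only [Equiv.coe_addRight]
      have hb1 : (∑ x, X x * (g + nn).1 x) + (∑ x, Y x * (g + nn).2 x)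
          = ((∑ x, X x * g.1 x) + (∑ x, Y x * g.2 x)) + a * t := by
        rw [← hbn]
        simp only [Prod.fst_add, Prod.snd_add, Pi.add_apply, mul_add, Finset.sum_add_distrib]
        ring
      rw [hinv g nn hnΔ hnC, hb1, hτadd, aux_zpow_add hζ, _root_.map_mul]
      ring
    have hSm0 : Sm = 0 := by
      have hfactor : (Polynomial.C (ζ ^ (τ (a * t)).val) - 1) * Sm = 0 := by
        rw [sub_mul, one_mul, ← hshift, sub_self]
      rcases mul_eq_zero.mp hfactor with hcase | hcase
      · exfalso
        apply aux_zpow_ne_one hζ hta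
        have h2 : Polynomial.C (ζ ^ (τ (a * t)).val) = 1 := sub_eq_zero.mp hcase
        rwa [← Polynomial.C_1, Polynomial.C_inj] at h2
      · exact hcase
    rw [hexp X Y, ← hSmdef, hSm0, mul_zero]
  · -- Part 2: value on the orthogonal of Δ
    rintro X Y h
    rw [hexp X Y]
    have h1 : (∑ g : ((Σ i, Fin (d i)) → F) × ((Σ i, Fin (d i)) → F),
        Polynomial.C (ζ ^ (τ ((∑ x, X x * g.1 x) + (∑ x, Y x * g.2 x))).val) * lam g)
        = ∑ g : ((Σ i, Fin (d i)) → F) × ((Σ i, Fin (d i)) → F), lam g := by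
      refine Finset.sum_congr rfl fun g _ => ?_
      by_cases hg : ∃ u : Fin k → F, g.2 = g.1 ᵥ* A + u ᵥ* B
      · rw [h g hg, hτ0]
        simp
      · rw [hlam0 g hg, mul_zero]
    have h2 : ((Fintype.card F : ℂ) ^ (∑ i, d i))⁻¹
        * (Fintype.card F : ℂ) ^ ((∑ i, d i) - rhat)
        = ((Fintype.card F : ℂ) ^ rhat)⁻¹ := by
      have hpow : (Fintype.card F : ℂ) ^ (∑ i, d i)
          = (Fintype.card F : ℂ) ^ ((∑ i, d i) - rhat) * (Fintype.card F : ℂ) ^ rhat := by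
        rw [← pow_add]
        congr 1
        omega
      rw [hpow, mul_inv, mul_right_comm, inv_mul_cancel₀ (pow_ne_zero _ hq0), one_mul]
    rw [h1, hcount, ← mul_assoc, ← _root_.map_mul, h2]
  · -- Part 3: translation invariance
    rintro X Y U V h
    rw [hexp, hexp]
    congr 1
    refine Finset.sum_congr rfl fun g _ => ?_
    by_cases hg : ∃ u : Fin k → F, g.2 = g.1 ᵥ* A + u ᵥ* B
    · have h0 := h g hg
      have hb : (∑ x, (X + U) x * g.1 x) + (∑ x, (Y + V) x * g.2 x)
          = (∑ x, X x * g.1 x) + (∑ x, Y x * g.2 x) := by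
        simp only [Pi.add_apply, add_mul, Finset.sum_add_distrib]
        linear_combination h0
      rw [hb]
    · rw [hlam0 g hg, mul_zero, mul_zero]
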